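/- Let P be a right LCM monoid and S = {[p,q] : p,q ∈ P} ∪ {0} with the multiplication [a,b][c,d] = [ab', dc'] if bP ∩ cP = rP with bb' = cc' = r, and 0 otherwise (0 absorbing). Then this multiplication is associative. -/

import Mathlib

/-- The principal right ideal `pP` of a monoid. -/
def rI {M : Type*} [Monoid M] (p : M) : Set M := {x | ∃ y, x = p * y}

/-- A right LCM monoid: left cancellative, and any two principal right ideals are
either disjoint or intersect in another principal right ideal. -/
class RightLCM (M : Type*) extends Monoid M where
  mul_left_cancel' : ∀ a b c : M, a * b = a * c → b = c
  lcm : ∀ p q : M, rI p ∩ rI q = ∅ ∨ ∃ r : M, rI p ∩ rI q = rI r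

namespace RightLCM

variable {M : Type*} [RightLCM M]

/-- The equivalence relation `(p,q) ∼ (pu,qu)` for units `u`. -/
def peq (x y : M × M) : Prop := ∃ u : M, IsUnit u ∧ x.1 = y.1 * u ∧ x.2 = y.2 * u

theorem peq_equivalence : Equivalence (peq (M := M)) := by
  constructor
  · intro x; exact ⟨1, isUnit_one, by simp, by simp⟩
  · rintro x y ⟨u, hu, h1, h2⟩
    obtain ⟨w, hw⟩ := hu
    subst hw
    exact ⟨↑w⁻¹, Units.isUnit _, by rw [h1, mul_assoc, w.mul_inv, mul_one],
      by rw [h2, mul_assoc, w.mul_inv, mul_one]⟩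
  · rintro x y z ⟨u, hu, h1, h2⟩ ⟨v, hv, h3, h4⟩
    exact ⟨v * u, hv.mul hu, by rw [h1, h3, mul_assoc], by rw [h2, h4, mul_assoc]⟩

instance pSetoid : Setoid (M × M) := ⟨peq, peq_equivalence⟩

/-- The inverse semigroup `S = {[p,q] : p,q ∈ P} ∪ {0}` associated to a right LCM monoid. -/
abbrev S (M : Type*) [RightLCM M] := WithZero (Quotient (pSetoid (M := M)))

/-- The class `[p,q]` as an element of `S M`. -/
def cls (p q : M) : S M := (Quotient.mk (pSetoid (M := M)) (p, q) : Quotient (pSetoid (M := M)))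

open scoped Classical in
/-- Product of two representatives: `[a,b][c,d] = [ab', dc']` when `bP ∩ cP = rP` with
`bb' = cc' = r`, and `0` when `bP ∩ cP = ∅`. -/
noncomputable def mulPair (x y : M × M) : S M :=
  if h : rI x.2 ∩ rI y.1 = ∅ then 0
  else
    have hr := (RightLCM.lcm x.2 y.1).resolve_left h
    have hmem : Classical.choose hr ∈ rI x.2 ∩ rI y.1 :=
      (Set.ext_iff.mp (Classical.choose_spec hr) _).mpr ⟨1, (mul_one _).symm⟩
    cls (x.1 * Classical.choose hmem.1) (y.2 * Classical.choose hmem.2)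

/-- The multiplication on `S M` (with `0` absorbing). -/
noncomputable def smul : S M → S M → S M
  | none, _ => 0
  | some _, none => 0
  | some a, some b => mulPair a.out b.out

/-- The involution `[p,q]* = [q,p]` on `S M`. -/
noncomputable def star : S M → S M
  | none => 0
  | some a => cls a.out.2 a.out.1

end RightLCM
namespace RightLCM
variable {M : Type*} [RightLCM M]

theorem cancel {a b c : M} (h : a * b = a * c) : b = c :=
  RightLCM.mul_left_cancel' a b c h

theorem mem_rI_self (p : M) : p ∈ rI p := ⟨1, (mul_one p).symm⟩

theorem rI_mul_subset (p q : M) : rI (p * q) ⊆ rI p := by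
  rintro x ⟨y, rfl⟩; exact ⟨q * y, by rw [mul_assoc]⟩

theorem unit_of_rI_eq {p q : M} (h : rI p = rI q) : ∃ u, IsUnit u ∧ q = p * u := by
  obtain ⟨y, hy⟩ : p ∈ rI q := h ▸ mem_rI_self p
  obtain ⟨z, hz⟩ : q ∈ rI p := h.symm ▸ mem_rI_self q
  have hzy : z * y = 1 := cancel (a := p) (by rw [← mul_assoc, ← hz, ← hy, mul_one])
  have hyz : y * z = 1 := cancel (a := q) (by rw [← mul_assoc, ← hy, ← hz, mul_one])
  exact ⟨z, ⟨⟨z, y, hzy, hyz⟩, rfl⟩, hz⟩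

theorem key0 {b c y z r : M} (h1 : rI b ∩ rI c = rI r) (hz : b * z = r)
    (h2 : rI y ∩ rI z = ∅) : rI (b * y) ∩ rI c = ∅ := by
  rw [Set.eq_empty_iff_forall_notMem]
  rintro q ⟨⟨s, rfl⟩, hc⟩
  have hq : b * y * s ∈ rI r := h1 ▸ ⟨⟨y * s, by rw [mul_assoc]⟩, hc⟩
  obtain ⟨t, ht⟩ := hq
  have : y * s = z * t := cancel (a := b) (by rw [← mul_assoc, ← mul_assoc, hz, ← ht])
  exact Set.eq_empty_iff_forall_notMem.mp h2 (y * s) ⟨⟨s, rfl⟩, ⟨t, this⟩⟩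

theorem key {b c y z m r : M} (h1 : rI b ∩ rI c = rI r) (hz : b * z = r)
    (h2 : rI y ∩ rI z = rI m) : rI (b * y) ∩ rI c = rI (b * m) := by
  obtain ⟨⟨e, he⟩, ⟨f, hf⟩⟩ : m ∈ rI y ∩ rI z := h2 ▸ mem_rI_self m
  ext q
  constructor
  · rintro ⟨⟨s, rfl⟩, hc⟩
    have hq : b * y * s ∈ rI r := h1 ▸ ⟨⟨y * s, by rw [mul_assoc]⟩, hc⟩
    obtain ⟨t, ht⟩ := hq
    have hyz : y * s = z * t := cancel (a := b) (by rw [← mul_assoc, ← mul_assoc, hz, ← ht])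
    obtain ⟨k, hk⟩ : y * s ∈ rI m := h2 ▸ ⟨⟨s, rfl⟩, ⟨t, hyz⟩⟩
    exact ⟨k, by rw [mul_assoc, hk, mul_assoc]⟩
  · rintro ⟨k, rfl⟩
    refine ⟨⟨e * k, by rw [he, ← mul_assoc, mul_assoc]⟩, ?_⟩
    have : b * m * k = r * (f * k) := by rw [hf, ← hz, mul_assoc, mul_assoc, mul_assoc]
    have hr : b * m * k ∈ rI r := ⟨f * k, this⟩
    exact (h1 ▸ hr : b * m * k ∈ rI b ∩ rI c).2

end RightLCM
namespace RightLCM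
variable {M : Type*} [RightLCM M]

theorem cls_eq {p q p' q' : M} (h : peq (M := M) (p, q) (p', q')) :
    cls p q = cls p' q' :=
  congrArg (WithZero.coe) (Quotient.sound h)

theorem mulPair_eq_zero {x y : M × M} (h : rI x.2 ∩ rI y.1 = ∅) :
    mulPair x y = 0 := by
  rw [mulPair, dif_pos h]

theorem mulPair_eq (x y : M × M) {r b c : M}
    (hr : rI x.2 ∩ rI y.1 = rI r) (hb : x.2 * b = r) (hc : y.1 * c = r) :
    mulPair x y = cls (x.1 * b) (y.2 * c) := by
  have hne : ¬ (rI x.2 ∩ rI y.1 = ∅) := by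
    rw [hr]
    intro h
    exact Set.eq_empty_iff_forall_notMem.mp h r (mem_rI_self r)
  rw [mulPair, dif_neg hne]
  have hlcm := (RightLCM.lcm x.2 y.1).resolve_left hne
  have hmem : Classical.choose hlcm ∈ rI x.2 ∩ rI y.1 :=
    (Set.ext_iff.mp (Classical.choose_spec hlcm) _).mpr ⟨1, (mul_one _).symm⟩
  show cls (x.1 * Classical.choose hmem.1) (y.2 * Classical.choose hmem.2)
      = cls (x.1 * b) (y.2 * c)
  obtain ⟨u, hu, hru⟩ := unit_of_rI_eq (hr.symm.trans (Classical.choose_spec hlcm))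
  have hb0 : Classical.choose hlcm = x.2 * Classical.choose hmem.1 :=
    Classical.choose_spec hmem.1
  have hc0 : Classical.choose hlcm = y.1 * Classical.choose hmem.2 :=
    Classical.choose_spec hmem.2
  have hb' : Classical.choose hmem.1 = b * u :=
    cancel (a := x.2) (by rw [← hb0, hru, ← hb, mul_assoc])
  have hc' : Classical.choose hmem.2 = c * u :=
    cancel (a := y.1) (by rw [← hc0, hru, ← hc, mul_assoc])
  rw [hb', hc']
  exact cls_eq ⟨u, hu, by simp [mul_assoc], by simp [mul_assoc]⟩

end RightLCM
namespace RightLCM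
variable {M : Type*} [RightLCM M]

theorem rI_unit {p u : M} (hu : IsUnit u) : rI (p * u) = rI p := by
  obtain ⟨w, rfl⟩ := hu
  ext x
  constructor
  · rintro ⟨y, rfl⟩; exact ⟨(w : M) * y, by rw [mul_assoc]⟩
  · rintro ⟨y, rfl⟩
    exact ⟨(w⁻¹ : Mˣ) * y, by rw [mul_assoc, Units.mul_inv_cancel_left]⟩

theorem mulPair_nonempty (x y : M × M) (h : ¬ (rI x.2 ∩ rI y.1 = ∅)) :
    ∃ r b c, rI x.2 ∩ rI y.1 = rI r ∧ x.2 * b = r ∧ y.1 * c = r := by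
  obtain ⟨r, hr⟩ := (RightLCM.lcm x.2 y.1).resolve_left h
  obtain ⟨⟨b, hb⟩, ⟨c, hc⟩⟩ : r ∈ rI x.2 ∩ rI y.1 := hr ▸ mem_rI_self r
  exact ⟨r, b, c, hr, hb.symm, hc.symm⟩

theorem mulPair_congr {x x' y y' : M × M} (hx : peq (M := M) x x')
    (hy : peq (M := M) y y') : mulPair x y = mulPair x' y' := by
  obtain ⟨u, hu, hx1, hx2⟩ := hx
  obtain ⟨v, hv, hy1, hy2⟩ := hy
  have h2 : rI x.2 = rI x'.2 := by rw [hx2, rI_unit hu]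
  have h1 : rI y.1 = rI y'.1 := by rw [hy1, rI_unit hv]
  by_cases h : rI x.2 ∩ rI y.1 = ∅
  · rw [mulPair_eq_zero h, mulPair_eq_zero (by rw [← h2, ← h1]; exact h)]
  · obtain ⟨r, b, c, hr, hb, hc⟩ := mulPair_nonempty x y h
    rw [mulPair_eq x y hr hb hc,
      mulPair_eq x' y' (r := r) (b := u * b) (c := v * c)
        (by rw [← h2, ← h1]; exact hr)
        (by rw [← mul_assoc, ← hx2, hb])
        (by rw [← mul_assoc, ← hy1, hc])]
    rw [hx1, hy2, mul_assoc, mul_assoc]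

theorem smul_zero (x : S M) : smul x 0 = 0 := by
  cases x <;> rfl

theorem smul_cls (p q s t : M) : smul (cls p q) (cls s t) = mulPair (p, q) (s, t) :=
  mulPair_congr (Quotient.mk_out (s := pSetoid) _) (Quotient.mk_out (s := pSetoid) _)

theorem smul_some (a b : Quotient (pSetoid (M := M))) {x y : M × M}
    (hx : ⟦x⟧ = a) (hy : ⟦y⟧ = b) :
    smul (a : S M) (b : S M) = mulPair x y :=
  mulPair_congr (hx ▸ Quotient.mk_out x) (hy ▸ Quotient.mk_out y)

end RightLCM
namespace RightLCM
variable {M : Type*} [RightLCM M]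

theorem zero_smul (x : S M) : smul 0 x = 0 := rfl

end RightLCM

open RightLCM in
/-- The multiplication on `S = {[p,q]} ∪ {0}` is associative. -/
theorem stmt3 {M : Type*} [RightLCM M] (a b c : S M) :
    smul (smul a b) c = smul a (smul b c) := by
  cases a with
  | none => rfl
  | some a₀ =>
  cases b with
  | none =>
    show smul (smul _ (0 : S M)) c = smul _ (smul (0 : S M) c)
    rfl
  | some b₀ =>
  cases c with
  | none =>
    show smul _ (0 : S M) = smul _ (smul _ (0 : S M))
    rw [RightLCM.smul_zero]; rfl
  | some c₀ =>
  obtain ⟨A, rfl⟩ : ∃ x, ⟦x⟧ = a₀ := ⟨a₀.out, Quotient.out_eq a₀⟩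
  obtain ⟨B, rfl⟩ : ∃ x, ⟦x⟧ = b₀ := ⟨b₀.out, Quotient.out_eq b₀⟩
  obtain ⟨C, rfl⟩ : ∃ x, ⟦x⟧ = c₀ := ⟨c₀.out, Quotient.out_eq c₀⟩
  by_cases h1 : rI A.2 ∩ rI B.1 = ∅
  · have hab : smul (some ⟦A⟧ : S M) (some ⟦B⟧) = 0 :=
      (smul_some _ _ rfl rfl).trans (mulPair_eq_zero h1)
    rw [hab, show smul (0 : S M) (some ⟦C⟧) = 0 from rfl]
    by_cases h2 : rI B.2 ∩ rI C.1 = ∅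
    · have hbc : smul (some ⟦B⟧ : S M) (some ⟦C⟧) = 0 :=
        (smul_some _ _ rfl rfl).trans (mulPair_eq_zero h2)
      rw [hbc, show smul (some ⟦A⟧ : S M) 0 = 0 from rfl]
    · obtain ⟨r', z, w, hr', hz, hw⟩ := mulPair_nonempty B C h2
      have hbc : smul (some ⟦B⟧ : S M) (some ⟦C⟧) = cls (B.1 * z) (C.2 * w) :=
        (smul_some _ _ rfl rfl).trans (mulPair_eq B C hr' hz hw)
      rw [hbc]
      have h3 : rI A.2 ∩ rI (B.1 * z) = ∅ :=
        Set.eq_empty_of_subset_empty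
          (h1 ▸ Set.inter_subset_inter_right _ (rI_mul_subset B.1 z))
      exact ((smul_some _ _ rfl rfl).trans (mulPair_eq_zero h3)).symm
  · obtain ⟨r, s, t, hr, hs, ht⟩ := mulPair_nonempty A B h1
    have hab : smul (some ⟦A⟧ : S M) (some ⟦B⟧) = cls (A.1 * s) (B.2 * t) :=
      (smul_some _ _ rfl rfl).trans (mulPair_eq A B hr hs ht)
    rw [hab]
    have hL : smul (cls (A.1 * s) (B.2 * t)) (some ⟦C⟧ : S M)
        = mulPair (A.1 * s, B.2 * t) C := smul_some _ _ rfl rfl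
    rw [hL]
    by_cases h2 : rI B.2 ∩ rI C.1 = ∅
    · have hbc : smul (some ⟦B⟧ : S M) (some ⟦C⟧) = 0 :=
        (smul_some _ _ rfl rfl).trans (mulPair_eq_zero h2)
      rw [hbc, show smul (some ⟦A⟧ : S M) 0 = 0 from rfl]
      have h3 : rI (B.2 * t) ∩ rI C.1 = ∅ :=
        Set.eq_empty_of_subset_empty
          (h2 ▸ Set.inter_subset_inter_left _ (rI_mul_subset B.2 t))
      exact mulPair_eq_zero h3
    · obtain ⟨r', z, w, hr', hz, hw⟩ := mulPair_nonempty B C h2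
      have hbc : smul (some ⟦B⟧ : S M) (some ⟦C⟧) = cls (B.1 * z) (C.2 * w) :=
        (smul_some _ _ rfl rfl).trans (mulPair_eq B C hr' hz hw)
      rw [hbc]
      have hR : smul (some ⟦A⟧ : S M) (cls (B.1 * z) (C.2 * w))
          = mulPair A (B.1 * z, C.2 * w) := smul_some _ _ rfl rfl
      rw [hR]
      by_cases h3 : rI t ∩ rI z = ∅
      · rw [mulPair_eq_zero (key0 hr' hz h3)]
        have h4 : rI (B.1 * z) ∩ rI A.2 = ∅ :=
          key0 (Set.inter_comm _ _ ▸ hr) ht (Set.inter_comm _ _ ▸ h3)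
        rw [mulPair_eq_zero (x := A) (y := (B.1 * z, C.2 * w))
          (Set.inter_comm _ _ ▸ h4)]
      · obtain ⟨m, hm⟩ := (RightLCM.lcm t z).resolve_left h3
        obtain ⟨⟨e, he⟩, ⟨f, hf⟩⟩ : m ∈ rI t ∩ rI z := hm ▸ mem_rI_self m
        have hrL : rI (B.2 * t) ∩ rI C.1 = rI (B.2 * m) := key hr' hz hm
        have hbL : (B.2 * t) * e = B.2 * m := by rw [mul_assoc, ← he]
        have hcL : C.1 * (w * f) = B.2 * m := by
          rw [← mul_assoc, hw, ← hz, mul_assoc, ← hf]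
        rw [mulPair_eq (A.1 * s, B.2 * t) C hrL hbL hcL]
        have hrR : rI (B.1 * z) ∩ rI A.2 = rI (B.1 * m) :=
          key (Set.inter_comm _ _ ▸ hr) ht (Set.inter_comm _ _ ▸ hm)
        have hbR : A.2 * (s * e) = B.1 * m := by
          rw [← mul_assoc, hs, ← ht, mul_assoc, ← he]
        have hcR : (B.1 * z) * f = B.1 * m := by rw [mul_assoc, ← hf]
        rw [mulPair_eq A (B.1 * z, C.2 * w) (Set.inter_comm _ _ ▸ hrR) hbR hcR]
        show cls ((A.1 * s) * e) (C.2 * (w * f)) = cls (A.1 * (s * e)) ((C.2 * w) * f)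
        rw [mul_assoc A.1 s e, mul_assoc C.2 w f]
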